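/- Let m ≥ 1 and q = 2^m. Define φ : F_q → F_2^{q−1} by φ(β) = (Tr_{q/2}(βθ^1), …, Tr_{q/2}(βθ^{q−1})), extended coordinatewise to F_q^{q+1} → F_2^{(q+1)(q−1)}. Since q+1 and q−1 are coprime, the map l ↦ (l mod (q+1), l mod (q−1)) is a bijection from Z/(q²−1) to Z/(q+1) × Z/(q−1); index the (q²−1) coordinates of the concatenated code by pairs (j, i) accordingly. Then under this coordinate identification the concatenation φ(M_q^⊥) equals K_q^⊥ = {(Tr_{q²/2}(δα^l) + Tr_{q/2}(cθ^l))_{l=1,…,q²−1} : c ∈ F_q, δ ∈ F_{q²}}. In particular, φ(M_q^⊥) has exactly 2^{3m} codewords and (under this identification) is invariant under the cyclic shift of coordinates, i.e., it is a binary cyclic code of parameters [q²−1, 3m] with nonzeros α and α^{1+q}. -/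

import Mathlib

open Finset

/- ### Auxiliary lemmas -/

lemma aux_pow_eq_pow_of_modEq {M : Type*} [Monoid M] {x : M} {a b : ℕ}
    (h : a ≡ b [MOD orderOf x]) : x ^ a = x ^ b := by
  wlog hab : a ≤ b generalizing a b
  · exact (this h.symm (le_of_not_ge hab)).symm
  obtain ⟨k, hk⟩ := (Nat.modEq_iff_dvd' hab).1 h
  have hb : b = a + orderOf x * k := by omega
  rw [hb, pow_add, pow_mul, pow_orderOf_eq_one, one_pow, mul_one]

lemma aux_exists_pow_eq {G : Type*} [Group G] [Fintype G] {a : G}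
    (ha : orderOf a = Fintype.card G) (b : G) : ∃ n : ℕ, a ^ n = b := by
  have htop : Subgroup.zpowers a = ⊤ :=
    Subgroup.eq_top_of_card_eq _ (by
      rw [Nat.card_zpowers, ha, Nat.card_eq_fintype_card])
  have hb : b ∈ Submonoid.powers a := by
    rw [mem_powers_iff_mem_zpowers, htop]; trivial
  obtain ⟨n, hn⟩ := hb
  exact ⟨n, hn⟩

lemma aux_zmod1 : ∀ a b : ZMod 2, a + b = 0 ↔ a = b := by decide

lemma aux_zmod2 : ∀ a b a' b' : ZMod 2, a + b = a' + b' → a + a' + (b + b') = 0 := by decide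

lemma aux_trace_sq (K : Type*) [Field K] [Fintype K] [Algebra (ZMod 2) K] (x : K) :
    Algebra.trace (ZMod 2) K (x ^ 2) = Algebra.trace (ZMod 2) K x := by
  haveI : Fact (Nat.Prime 2) := ⟨Nat.prime_two⟩
  haveI : CharP K 2 := charP_of_injective_ringHom (algebraMap (ZMod 2) K).injective 2
  let f : K →+* K := frobenius K 2
  have hcomm : ∀ r : ZMod 2, f (algebraMap (ZMod 2) K r) = algebraMap (ZMod 2) K r := by
    intro r
    exact RingHom.congr_fun
      (RingHom.ext_zmod (f.comp (algebraMap (ZMod 2) K)) (algebraMap (ZMod 2) K)) r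
  let g : K →ₐ[ZMod 2] K := { f with commutes' := hcomm }
  have hinj : Function.Injective g := f.injective
  have hbij : Function.Bijective g := Finite.injective_iff_bijective.1 hinj
  have h := Algebra.trace_eq_of_algEquiv (AlgEquiv.ofBijective g hbij) x
  have hx : (AlgEquiv.ofBijective g hbij) x = x ^ 2 := rfl
  rw [hx] at h
  exact h

lemma aux_trace_two_pow (K : Type*) [Field K] [Fintype K] [Algebra (ZMod 2) K]
    (k : ℕ) (x : K) :
    Algebra.trace (ZMod 2) K (x ^ 2 ^ k) = Algebra.trace (ZMod 2) K x := by
  induction k with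
  | zero => simp
  | succ k ih =>
      have : x ^ 2 ^ (k + 1) = (x ^ 2 ^ k) ^ 2 := by
        rw [← pow_mul, pow_succ]
      rw [this, aux_trace_sq, ih]

/-- Let `m ≥ 1`, `q = 2^m`, `F = F_q ⊆ K = F_{q²}`, `α` primitive in `K`,
`ζ = α^{q−1}`, `θ = α^{q+1} ∈ F`.  Let `φ : F → F_2^{q−1}`, `φ(β) = (Tr_{q/2}(βθ^i))_i`,
extended coordinatewise, and identify `{1,…,q²−1}` with pairs `(j,i)` via the Chinese
Remainder Theorem (any `e` satisfying the congruences below is such an identification and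
is bijective).  Then the concatenation `φ(M_q^⊥)` corresponds, under this identification,
to `K_q^⊥ = {(Tr_{q²/2}(δα^l) + Tr_{q/2}(cθ^l))_l : c ∈ F, δ ∈ K}`; in particular
`φ(M_q^⊥)` has exactly `2^{3m}` codewords and `K_q^⊥` is invariant under the cyclic
coordinate shift, i.e. it is a binary cyclic code of length `q²−1` and dimension `3m`
with nonzeros `α`, `α^{1+q}`. -/
theorem stmt_7 (m q : ℕ) (hm : 1 ≤ m) (hq : q = 2 ^ m) [NeZero (q ^ 2 - 1)]
    (F K : Type) [Field F] [Field K] [Fintype F] [Fintype K] [DecidableEq F]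
    [Algebra (ZMod 2) F] [Algebra (ZMod 2) K] [Algebra F K] [IsScalarTower (ZMod 2) F K]
    (hcF : Fintype.card F = q) (hcK : Fintype.card K = q ^ 2)
    (α : K) (hα : orderOf α = q ^ 2 - 1)
    (ζ : K) (hζ : ζ = α ^ (q - 1))
    (θ : F) (hθ : algebraMap F K θ = α ^ (q + 1))
    (Mdual : Set (Fin (q + 1) → F))
    (hM : Mdual = {w | ∃ (c : F) (δ : K), ∀ j : Fin (q + 1),
        w j = c + Algebra.trace F K (δ * ζ ^ ((j : ℕ) + 1))})
    (Φ : (Fin (q + 1) → F) → (Fin (q + 1) × Fin (q - 1) → ZMod 2))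
    (hΦ : ∀ (v : Fin (q + 1) → F) (ji : Fin (q + 1) × Fin (q - 1)),
      Φ v ji = Algebra.trace (ZMod 2) F (v ji.1 * θ ^ ((ji.2 : ℕ) + 1)))
    (Kdual : Set (Fin (q ^ 2 - 1) → ZMod 2))
    (hK : Kdual = {w | ∃ (c : F) (δ : K), ∀ l : Fin (q ^ 2 - 1),
        w l = Algebra.trace (ZMod 2) K (δ * α ^ ((l : ℕ) + 1))
            + Algebra.trace (ZMod 2) F (c * θ ^ ((l : ℕ) + 1))})
    (e : Fin (q ^ 2 - 1) → Fin (q + 1) × Fin (q - 1))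
    (he1 : ∀ l, ((e l).1 : ℕ) + 1 ≡ (l : ℕ) + 1 [MOD q + 1])
    (he2 : ∀ l, ((e l).2 : ℕ) + 1 ≡ (l : ℕ) + 1 [MOD q - 1]) :
    Function.Bijective e ∧
    (∀ w : Fin (q + 1) × Fin (q - 1) → ZMod 2, w ∈ Φ '' Mdual ↔ (w ∘ e) ∈ Kdual) ∧
    (Φ '' Mdual).ncard = 2 ^ (3 * m) ∧
    (∀ w ∈ Kdual, (fun l => w (l + 1)) ∈ Kdual) := by
  classical
  -- basic numerology
  have hq2 : 2 ≤ q := by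
    rw [hq]
    calc 2 = 2 ^ 1 := (pow_one 2).symm
    _ ≤ 2 ^ m := Nat.pow_le_pow_right (by norm_num) hm
  have hq1 : 1 ≤ q := by omega
  have h1q2 : 1 ≤ q ^ 2 := Nat.one_le_pow 2 q (by omega)
  have hN : (q + 1) * (q - 1) = q ^ 2 - 1 := by
    zify [hq1, h1q2]; ring
  have hNpos : 0 < q ^ 2 - 1 := by
    have : 4 ≤ q ^ 2 := by nlinarith
    omega
  have hdvd1 : (q - 1) ∣ (q ^ 2 - 1) := ⟨q + 1, by rw [← hN]; ring⟩
  have hdvd2 : (q + 1) ∣ (q ^ 2 - 1) := ⟨q - 1, by rw [← hN]⟩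
  have hqeven : (2 : ℕ) ∣ q := by
    rw [hq]; exact dvd_pow_self 2 (by omega)
  have hcop : Nat.Coprime (q + 1) (q - 1) := by
    have h1 : Nat.gcd (q + 1) (q - 1) ∣ 2 := by
      have := Nat.dvd_sub (Nat.gcd_dvd_left (q + 1) (q - 1)) (Nat.gcd_dvd_right (q + 1) (q - 1))
      simpa [show q + 1 - (q - 1) = 2 by omega] using this
    have h2 : Nat.gcd (q + 1) (q - 1) ∣ q + 1 := Nat.gcd_dvd_left _ _
    rcases (Nat.prime_two).eq_one_or_self_of_dvd _ h1 with h | h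
    · exact h
    · exfalso
      rw [h] at h2
      omega
  -- module instances
  haveI : Module.Finite (ZMod 2) F := Module.Finite.of_finite
  haveI : Module.Finite (ZMod 2) K := Module.Finite.of_finite
  haveI : Module.Finite F K := Module.Finite.of_finite
  haveI : Algebra.IsAlgebraic (ZMod 2) F := Algebra.IsAlgebraic.of_finite _ _
  haveI : Algebra.IsAlgebraic (ZMod 2) K := Algebra.IsAlgebraic.of_finite _ _
  haveI : Fact (Nat.Prime 2) := ⟨Nat.prime_two⟩
  haveI hCF : CharP F 2 := charP_of_injective_ringHom (algebraMap (ZMod 2) F).injective 2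
  haveI hCK : CharP K 2 := charP_of_injective_ringHom (algebraMap (ZMod 2) K).injective 2
  -- orders
  have hα0 : α ≠ 0 := by
    intro h
    have h1 := pow_orderOf_eq_one α
    rw [hα, h, zero_pow (by omega)] at h1
    exact zero_ne_one h1
  have hordζ : orderOf ζ = q + 1 := by
    rw [hζ, orderOf_pow' α (show q - 1 ≠ 0 by omega), hα,
      Nat.gcd_eq_right hdvd1, ← hN, Nat.mul_div_cancel _ (by omega)]
  have hordθK : orderOf (α ^ (q + 1)) = q - 1 := by
    rw [orderOf_pow' α (show q + 1 ≠ 0 by omega), hα,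
      Nat.gcd_eq_right hdvd2, ← hN, mul_comm, Nat.mul_div_cancel _ (by omega)]
  have hordθ : orderOf θ = q - 1 := by
    have := orderOf_injective (algebraMap F K).toMonoidHom (algebraMap F K).injective θ
    rw [show (algebraMap F K).toMonoidHom θ = algebraMap F K θ from rfl, hθ, hordθK] at this
    exact this.symm
  have hθ0 : θ ≠ 0 := by
    intro h
    have h1 := pow_orderOf_eq_one θ
    rw [hordθ, h, zero_pow (by omega)] at h1
    exact zero_ne_one h1
  -- power congruences
  have hαpow : ∀ {a b : ℕ}, a ≡ b [MOD q ^ 2 - 1] → α ^ a = α ^ b := by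
    intro a b h
    exact aux_pow_eq_pow_of_modEq (by rwa [hα])
  have hθpow : ∀ {a b : ℕ}, a ≡ b [MOD q - 1] → θ ^ a = θ ^ b := by
    intro a b h
    exact aux_pow_eq_pow_of_modEq (by rwa [hordθ])
  -- generators
  have hgenK : ∀ y : K, y ≠ 0 → ∃ n : ℕ, α ^ n = y := by
    intro y hy
    have hu : orderOf (Units.mk0 α hα0) = Fintype.card Kˣ := by
      rw [← orderOf_units, Units.val_mk0, hα, Fintype.card_units, hcK]
    obtain ⟨n, hn⟩ := aux_exists_pow_eq hu (Units.mk0 y hy)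
    exact ⟨n, by simpa using congrArg Units.val hn⟩
  have hgenF : ∀ y : F, y ≠ 0 → ∃ n : ℕ, θ ^ n = y := by
    intro y hy
    have hu : orderOf (Units.mk0 θ hθ0) = Fintype.card Fˣ := by
      rw [← orderOf_units, Units.val_mk0, hordθ, Fintype.card_units, hcF]
    obtain ⟨n, hn⟩ := aux_exists_pow_eq hu (Units.mk0 y hy)
    exact ⟨n, by simpa using congrArg Units.val hn⟩
  -- part 1 : bijectivity of e
  have hcardeq : Fintype.card (Fin (q ^ 2 - 1)) = Fintype.card (Fin (q + 1) × Fin (q - 1)) := by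
    simpa using hN.symm
  have einj : Function.Injective e := by
    intro l l' hee
    have h1 : (l : ℕ) + 1 ≡ (l' : ℕ) + 1 [MOD q + 1] := by
      have a1 := he1 l
      have a2 := he1 l'
      rw [hee] at a1
      exact a1.symm.trans a2
    have h2 : (l : ℕ) + 1 ≡ (l' : ℕ) + 1 [MOD q - 1] := by
      have a1 := he2 l
      have a2 := he2 l'
      rw [hee] at a1
      exact a1.symm.trans a2
    have h12 : (l : ℕ) + 1 ≡ (l' : ℕ) + 1 [MOD (q + 1) * (q - 1)] :=
      (Nat.modEq_and_modEq_iff_modEq_mul hcop).1 ⟨h1, h2⟩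
    rw [hN] at h12
    have h3 : (l : ℕ) ≡ (l' : ℕ) [MOD q ^ 2 - 1] := h12.add_right_cancel' 1
    have h4 : (l : ℕ) % (q ^ 2 - 1) = (l' : ℕ) % (q ^ 2 - 1) := h3
    rw [Nat.mod_eq_of_lt l.isLt, Nat.mod_eq_of_lt l'.isLt] at h4
    exact Fin.ext h4
  have ebij : Function.Bijective e :=
    (Fintype.bijective_iff_injective_and_card e).2 ⟨einj, hcardeq⟩
  -- Frobenius x ↦ x^(2q) on K
  haveI : ExpChar K 2 := ExpChar.prime Nat.prime_two
  set f : K →+* K := iterateFrobenius K 2 (m + 1) with hfdef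
  have hfx : ∀ x : K, f x = x ^ (2 * q) := by
    intro x
    rw [hfdef, iterateFrobenius_def, pow_succ', hq]
  have hfbij : Function.Bijective f := Finite.injective_iff_bijective.1 f.injective
  set fE : K ≃ K := Equiv.ofBijective f hfbij with hfEdef
  have hfE : ∀ x : K, f (fE.symm x) = x := fun x => fE.apply_symm_apply x
  have htrf : ∀ x : K, Algebra.trace (ZMod 2) K (f x) = Algebra.trace (ZMod 2) K x := by
    intro x
    rw [hfdef]
    exact aux_trace_two_pow K (m + 1) x
  -- the key computation
  have hkey : ∀ (c : F) (δ : K) (l : Fin (q ^ 2 - 1)),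
      Algebra.trace (ZMod 2) F
          ((c + Algebra.trace F K (δ * ζ ^ (((e l).1 : ℕ) + 1))) * θ ^ (((e l).2 : ℕ) + 1))
        = Algebra.trace (ZMod 2) K (fE.symm δ * α ^ ((l : ℕ) + 1))
            + Algebra.trace (ZMod 2) F (c * θ ^ ((l : ℕ) + 1)) := by
    intro c δ l
    set j : ℕ := ((e l).1 : ℕ) with hj
    set i : ℕ := ((e l).2 : ℕ) with hi
    have hθi : θ ^ (i + 1) = θ ^ ((l : ℕ) + 1) := hθpow (he2 l)
    rw [add_mul, map_add]
    have h2 : Algebra.trace F K (δ * ζ ^ (j + 1)) * θ ^ (i + 1)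
        = Algebra.trace F K (δ * ζ ^ (j + 1) * (algebraMap F K θ) ^ (i + 1)) := by
      have : δ * ζ ^ (j + 1) * (algebraMap F K θ) ^ (i + 1)
          = θ ^ (i + 1) • (δ * ζ ^ (j + 1)) := by
        rw [Algebra.smul_def, map_pow]; ring
      rw [this, map_smul, smul_eq_mul, mul_comm]
    have h3 : δ * ζ ^ (j + 1) * (algebraMap F K θ) ^ (i + 1)
        = f (fE.symm δ * α ^ ((l : ℕ) + 1)) := by
      rw [hθ, hζ, ← pow_mul, ← pow_mul, mul_assoc, ← pow_add]
      have hmod : (q - 1) * (j + 1) + (q + 1) * (i + 1)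
          ≡ ((l : ℕ) + 1) * (2 * q) [MOD q ^ 2 - 1] := by
        have a1 : (q - 1) * (j + 1) ≡ (q - 1) * ((l : ℕ) + 1) [MOD q ^ 2 - 1] := by
          have := (he1 l).mul_left' (q - 1)
          rwa [show (q - 1) * (q + 1) = q ^ 2 - 1 by rw [← hN]; ring] at this
        have a2 : (q + 1) * (i + 1) ≡ (q + 1) * ((l : ℕ) + 1) [MOD q ^ 2 - 1] := by
          have := (he2 l).mul_left' (q + 1)
          rwa [hN] at this
        have a3 := a1.add a2
        have a4 : (q - 1) * ((l : ℕ) + 1) + (q + 1) * ((l : ℕ) + 1)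
            = ((l : ℕ) + 1) * (2 * q) := by
          rw [← add_mul]
          have : q - 1 + (q + 1) = 2 * q := by omega
          rw [this]; ring
        rwa [a4] at a3
      rw [hαpow hmod, pow_mul, map_mul, hfE, map_pow, hfx, ← pow_mul, ← pow_mul,
        mul_comm ((l : ℕ) + 1) (2 * q)]
    rw [h2, h3, Algebra.trace_trace (S := F), htrf, hθi, add_comm]
  -- part 2
  have part2 : ∀ w : Fin (q + 1) × Fin (q - 1) → ZMod 2,
      w ∈ Φ '' Mdual ↔ (w ∘ e) ∈ Kdual := by
    intro w
    constructor
    · rintro ⟨v, hv, rfl⟩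
      rw [hM] at hv
      obtain ⟨c, δ, hvj⟩ := hv
      rw [hK]
      refine ⟨c, fE.symm δ, fun l => ?_⟩
      rw [Function.comp_apply, hΦ, hvj]
      exact hkey c δ l
    · intro hw
      rw [hK] at hw
      obtain ⟨c, δ', hwl⟩ := hw
      have hss : fE.symm (f δ') = δ' := fE.symm_apply_apply δ'
      refine ⟨fun j => c + Algebra.trace F K (f δ' * ζ ^ ((j : ℕ) + 1)), ?_, ?_⟩
      · rw [hM]; exact ⟨c, f δ', fun j => rfl⟩
      · funext ji
        obtain ⟨l, rfl⟩ := ebij.2 ji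
        rw [hΦ]
        show Algebra.trace (ZMod 2) F
            ((c + Algebra.trace F K (f δ' * ζ ^ (((e l).1 : ℕ) + 1)))
              * θ ^ (((e l).2 : ℕ) + 1)) = w (e l)
        rw [hkey c (f δ') l, hss, ← hwl l, Function.comp_apply]
  -- kernel computations for part 3
  have hall : ∀ (c : F) (δ : K), (∀ l : Fin (q ^ 2 - 1),
      Algebra.trace (ZMod 2) K (δ * α ^ ((l : ℕ) + 1))
        + Algebra.trace (ZMod 2) F (c * θ ^ ((l : ℕ) + 1)) = 0) →
      ∀ n : ℕ, Algebra.trace (ZMod 2) K (δ * α ^ n)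
        = Algebra.trace (ZMod 2) F (c * θ ^ n) := by
    intro c δ h n
    set n' : ℕ := if n % (q ^ 2 - 1) = 0 then q ^ 2 - 1 else n % (q ^ 2 - 1) with hn'
    have hb : 1 ≤ n' ∧ n' ≤ q ^ 2 - 1 := by
      rw [hn']
      by_cases h0 : n % (q ^ 2 - 1) = 0
      · simp only [h0, if_true]
        omega
      · simp only [h0, if_false]
        have := Nat.mod_lt n hNpos
        omega
    have hn'm : n' ≡ n [MOD q ^ 2 - 1] := by
      rw [hn']
      by_cases h0 : n % (q ^ 2 - 1) = 0
      · simp only [h0, if_true]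
        have a1 : q ^ 2 - 1 ≡ 0 [MOD q ^ 2 - 1] := Nat.modEq_zero_iff_dvd.2 dvd_rfl
        have a2 : n ≡ 0 [MOD q ^ 2 - 1] :=
          Nat.modEq_zero_iff_dvd.2 (Nat.dvd_of_mod_eq_zero h0)
        exact a1.trans a2.symm
      · simp only [h0, if_false]
        exact Nat.mod_modEq n _
    have hlval : ((⟨n' - 1, by omega⟩ : Fin (q ^ 2 - 1)) : ℕ) + 1 = n' := by
      simp; omega
    have hthis := h ⟨n' - 1, by omega⟩
    rw [hlval, hαpow hn'm, hθpow (Nat.ModEq.of_dvd hdvd1 hn'm)] at hthis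
    exact (aux_zmod1 _ _).1 hthis
  have hker : ∀ (c : F) (δ : K), (∀ n : ℕ,
      Algebra.trace (ZMod 2) K (δ * α ^ n) = Algebra.trace (ZMod 2) F (c * θ ^ n)) →
      c = 0 ∧ δ = 0 := by
    intro c δ halln
    have hq1z : ((q + 1 : ℕ) : ZMod 2) = 1 := by
      have h0 : ((q : ℕ) : ZMod 2) = 0 := (ZMod.natCast_eq_zero_iff q 2).2 hqeven
      push_cast
      rw [h0, zero_add]
    have hζsum : ∑ s ∈ Finset.range (q + 1), ζ ^ s = 0 := by
      have hζ1 : ζ ≠ 1 := by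
        intro h; rw [h, orderOf_one] at hordζ; omega
      rw [geom_sum_eq hζ1]
      have : ζ ^ (q + 1) = 1 := by rw [← hordζ]; exact pow_orderOf_eq_one ζ
      rw [this, sub_self, zero_div]
    have hTF : ∀ n : ℕ, Algebra.trace (ZMod 2) F (c * θ ^ n) = 0 := by
      intro n
      have hterm : ∀ s : ℕ, Algebra.trace (ZMod 2) K (δ * α ^ (n + (q - 1) * s))
          = Algebra.trace (ZMod 2) F (c * θ ^ n) := by
        intro s
        rw [halln, hθpow (show n + (q - 1) * s ≡ n [MOD q - 1] from by
          have h1 : (q - 1) * s ≡ 0 [MOD q - 1] :=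
            Nat.modEq_zero_iff_dvd.2 (dvd_mul_right _ _)
          simpa using (Nat.ModEq.refl n).add h1)]
      have hsum1 : ∑ s ∈ Finset.range (q + 1),
          Algebra.trace (ZMod 2) K (δ * α ^ (n + (q - 1) * s))
          = (q + 1) • Algebra.trace (ZMod 2) F (c * θ ^ n) := by
        rw [Finset.sum_congr rfl fun s _ => hterm s, Finset.sum_const, Finset.card_range]
      have hsum2 : ∑ s ∈ Finset.range (q + 1),
          Algebra.trace (ZMod 2) K (δ * α ^ (n + (q - 1) * s)) = 0 := by
        have hx : ∀ s : ℕ, δ * α ^ (n + (q - 1) * s) = (δ * α ^ n) * ζ ^ s := by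
          intro s; rw [pow_add, pow_mul, ← hζ]; ring
        calc ∑ s ∈ Finset.range (q + 1),
              Algebra.trace (ZMod 2) K (δ * α ^ (n + (q - 1) * s))
            = Algebra.trace (ZMod 2) K ((δ * α ^ n) * ∑ s ∈ Finset.range (q + 1), ζ ^ s) := by
              rw [Finset.mul_sum, map_sum]
              exact Finset.sum_congr rfl fun s _ => by rw [hx]
          _ = 0 := by rw [hζsum, mul_zero, map_zero]
      have h0 : ((q + 1 : ℕ) : ZMod 2) * Algebra.trace (ZMod 2) F (c * θ ^ n) = 0 := by
        rw [← nsmul_eq_mul, ← hsum1, hsum2]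
      rwa [hq1z, one_mul] at h0
    have hδ0 : δ = 0 := by
      apply (traceForm_nondegenerate (ZMod 2) K).1 δ
      intro y
      rw [Algebra.traceForm_apply]
      rcases eq_or_ne y 0 with rfl | hy
      · simp
      · obtain ⟨n, rfl⟩ := hgenK y hy
        rw [halln n, hTF n]
    have hc0 : c = 0 := by
      apply (traceForm_nondegenerate (ZMod 2) F).1 c
      intro y
      rw [Algebra.traceForm_apply]
      rcases eq_or_ne y 0 with rfl | hy
      · simp
      · obtain ⟨n, rfl⟩ := hgenF y hy
        exact hTF n
    exact ⟨hc0, hδ0⟩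
  -- part 3 : cardinality
  set P : F × K → (Fin (q ^ 2 - 1) → ZMod 2) := fun p l =>
    Algebra.trace (ZMod 2) K (p.2 * α ^ ((l : ℕ) + 1))
      + Algebra.trace (ZMod 2) F (p.1 * θ ^ ((l : ℕ) + 1)) with hPdef
  have hKdualP : Kdual = Set.range P := by
    rw [hK]
    ext w
    constructor
    · rintro ⟨c, δ, hw⟩
      exact ⟨(c, δ), by funext l; exact (hw l).symm⟩
    · rintro ⟨⟨c, δ⟩, rfl⟩
      exact ⟨c, δ, fun l => rfl⟩
  have hPinj : Function.Injective P := by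
    rintro ⟨c1, δ1⟩ ⟨c2, δ2⟩ hP12
    have hz : ∀ l : Fin (q ^ 2 - 1),
        Algebra.trace (ZMod 2) K ((δ1 + δ2) * α ^ ((l : ℕ) + 1))
          + Algebra.trace (ZMod 2) F ((c1 + c2) * θ ^ ((l : ℕ) + 1)) = 0 := by
      intro l
      have h := congrFun hP12 l
      simp only [hPdef] at h
      rw [add_mul, map_add, add_mul, map_add]
      exact aux_zmod2 _ _ _ _ h
    obtain ⟨hc, hδ⟩ := hker (c1 + c2) (δ1 + δ2) (hall _ _ hz)
    have hc' : c1 = c2 := by rwa [add_eq_zero_iff_eq_neg, CharTwo.neg_eq] at hc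
    have hδ' : δ1 = δ2 := by rwa [add_eq_zero_iff_eq_neg, CharTwo.neg_eq] at hδ
    rw [hc', hδ']
  have hcard3 : Kdual.ncard = 2 ^ (3 * m) := by
    rw [hKdualP, ← Set.image_univ, Set.ncard_image_of_injective _ hPinj, Set.ncard_univ,
      Nat.card_eq_fintype_card, Fintype.card_prod, hcF, hcK, hq, ← pow_mul, ← pow_add]
    congr 1
    ring
  set eE : Fin (q ^ 2 - 1) ≃ (Fin (q + 1) × Fin (q - 1)) := Equiv.ofBijective e ebij
    with heEdef
  have heE : ∀ l, eE.symm (e l) = l := fun l => eE.symm_apply_apply l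
  have himg : (fun w : (Fin (q + 1) × Fin (q - 1)) → ZMod 2 => w ∘ e) '' (Φ '' Mdual)
      = Kdual := by
    ext w'
    constructor
    · rintro ⟨w, hw, rfl⟩
      exact (part2 w).1 hw
    · intro hw'
      have hcomp : (w' ∘ eE.symm) ∘ e = w' := by
        funext l
        show w' (eE.symm (e l)) = w' l
        rw [heE]
      refine ⟨w' ∘ eE.symm, ?_, hcomp⟩
      apply (part2 _).2
      rwa [hcomp]
  have hcomp_inj : Function.Injective
      (fun w : (Fin (q + 1) × Fin (q - 1)) → ZMod 2 => w ∘ e) := by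
    intro w1 w2 h
    funext ji
    obtain ⟨l, rfl⟩ := ebij.2 ji
    exact congrFun h l
  have hcard2 : (Φ '' Mdual).ncard = 2 ^ (3 * m) := by
    rw [← hcard3, ← himg, Set.ncard_image_of_injective _ hcomp_inj]
  -- part 4 : cyclic shift invariance
  have part4 : ∀ w ∈ Kdual, (fun l => w (l + 1)) ∈ Kdual := by
    intro w hw
    rw [hK] at hw ⊢
    obtain ⟨c, δ, hwl⟩ := hw
    refine ⟨c * θ, δ * α, fun l => ?_⟩
    show w (l + 1) = _
    rw [hwl (l + 1)]
    have h1 : ((l + 1 : Fin (q ^ 2 - 1)) : ℕ) + 1 ≡ (l : ℕ) + 2 [MOD q ^ 2 - 1] := by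
      rw [Fin.val_add, Fin.val_one']
      calc ((l : ℕ) + 1 % (q ^ 2 - 1)) % (q ^ 2 - 1) + 1
          ≡ ((l : ℕ) + 1 % (q ^ 2 - 1)) + 1 [MOD q ^ 2 - 1] :=
            (Nat.mod_modEq _ _).add_right 1
        _ ≡ (l : ℕ) + 1 + 1 [MOD q ^ 2 - 1] :=
            ((Nat.mod_modEq 1 _).add_left (l : ℕ)).add_right 1
        _ = (l : ℕ) + 2 := by omega
    rw [hαpow h1, hθpow (Nat.ModEq.of_dvd hdvd1 h1)]
    have e1 : δ * α ^ ((l : ℕ) + 2) = δ * α * α ^ ((l : ℕ) + 1) := by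
      rw [show (l : ℕ) + 2 = ((l : ℕ) + 1) + 1 from rfl, pow_succ]; ring
    have e2 : c * θ ^ ((l : ℕ) + 2) = c * θ * θ ^ ((l : ℕ) + 1) := by
      rw [show (l : ℕ) + 2 = ((l : ℕ) + 1) + 1 from rfl, pow_succ]; ring
    rw [e1, e2]
  exact ⟨ebij, part2, hcard2, part4⟩
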